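/- Gowers–Cauchy–Schwarz inequality: Let G be a finite abelian group and for each subset S ⊆ [k] let f_S : G → ℂ. Then |𝔼_{x,y₁,…,y_k} ∏_{S⊆[k]} C^{k−|S|} f_S(x + Σ_{i∈S} y_i)| ≤ ∏_{S⊆[k]} ‖f_S‖_{U^k}. -/

import Mathlib

open Finset Function

set_option linter.unusedSectionVars false
set_option maxHeartbeats 1000000

/-- The `k`-th Gowers uniformity norm of `f : G → ℂ` on a finite abelian group `G`. -/
noncomputable def gowersNorm {G : Type} [AddCommGroup G] [Fintype G] [DecidableEq G]
    (k : ℕ) (f : G → ℂ) : ℝ :=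
  (‖(∑ x : G, ∑ y : Fin k → G, ∏ S : Finset (Fin k),
      (fun z : ℂ => (starRingEnd ℂ) z)^[k - S.card] (f (x + ∑ i ∈ S, y i))) /
    (Fintype.card G : ℂ) ^ (k + 1)‖) ^ ((1 : ℝ) / 2 ^ k)


set_option linter.unusedSectionVars false
set_option maxHeartbeats 1000000

namespace GCS

noncomputable abbrev Cj : ℂ → ℂ := fun z : ℂ => (starRingEnd ℂ) z

lemma cj_succ (n : ℕ) (z : ℂ) : Cj^[n + 1] z = (starRingEnd ℂ) (Cj^[n] z) :=
  Function.iterate_succ_apply' _ _ _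

lemma cj_pred {n : ℕ} (hn : 1 ≤ n) (z : ℂ) : Cj^[n - 1] z = (starRingEnd ℂ) (Cj^[n] z) := by
  obtain ⟨m, rfl⟩ := Nat.exists_eq_add_of_le hn
  rw [add_comm 1 m, Nat.add_sub_cancel, cj_succ, Complex.conj_conj]

variable {G : Type} [AddCommGroup G] [Fintype G] [DecidableEq G]

def shiftAt (k : ℕ) (i : Fin k) (t : G) : (Fin k → G) ≃ (Fin k → G) where
  toFun y := Function.update y i (y i + t)
  invFun y := Function.update y i (y i - t)
  left_inv y := by
    funext j
    rcases eq_or_ne j i with rfl | h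
    · simp
    · simp [Function.update_of_ne h]
  right_inv y := by
    funext j
    rcases eq_or_ne j i with rfl | h
    · simp
    · simp [Function.update_of_ne h]

lemma sum_update (k : ℕ) (i : Fin k) (F : (Fin k → G) → ℂ) :
    ∑ y : Fin k → G, ∑ t : G, F (Function.update y i t)
      = (Fintype.card G : ℂ) * ∑ y : Fin k → G, F y := by
  have h1 : ∀ y : Fin k → G, ∑ t : G, F (Function.update y i t)
      = ∑ t : G, F (Function.update y i (y i + t)) := by
    intro y
    exact (Fintype.sum_equiv (Equiv.addLeft (y i)) _ _ (fun t => rfl)).symm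
  simp_rw [h1]
  rw [Finset.sum_comm]
  have h2 : ∀ t : G, ∑ y : Fin k → G, F (Function.update y i (y i + t))
      = ∑ y : Fin k → G, F y := by
    intro t
    exact Fintype.sum_equiv (shiftAt k i t) _ _ (fun y => rfl)
  simp_rw [h2, Finset.sum_const, Finset.card_univ, nsmul_eq_mul]

lemma prod_reindex_insert {k : ℕ} (i : Fin k) (g : Finset (Fin k) → ℂ) :
    ∏ S ∈ univ.filter (fun S => i ∈ S), g S
      = ∏ S ∈ univ.filter (fun S => i ∉ S), g (insert i S) := by
  refine Finset.prod_bij' (fun S _ => S.erase i) (fun S _ => insert i S) ?_ ?_ ?_ ?_ ?_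
  · intro S hS; simp
  · intro S hS; simp
  · intro S hS; simp only [Finset.mem_filter] at hS; exact Finset.insert_erase hS.2
  · intro S hS; simp only [Finset.mem_filter] at hS; exact Finset.erase_insert hS.2
  · intro S hS; simp only [Finset.mem_filter] at hS; rw [Finset.insert_erase hS.2]

lemma card_lt_of_not_mem {k : ℕ} {i : Fin k} {S : Finset (Fin k)} (h : i ∉ S) : S.card < k := by
  have hsub : S ⊆ Finset.univ.erase i :=
    fun j hj => Finset.mem_erase.2 ⟨fun e => h (e ▸ hj), Finset.mem_univ j⟩
  have := Finset.card_le_card hsub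
  rw [Finset.card_erase_of_mem (Finset.mem_univ i), Finset.card_univ, Fintype.card_fin] at this
  have hk : 0 < k := i.pos
  omega

lemma card_le_k {k : ℕ} (S : Finset (Fin k)) : S.card ≤ k := by
  simpa using Finset.card_le_univ S


noncomputable def gsum (k : ℕ) (f : Finset (Fin k) → G → ℂ) : ℂ :=
  ∑ x : G, ∑ y : Fin k → G, ∏ S : Finset (Fin k),
      Cj^[k - S.card] (f S (x + ∑ i ∈ S, y i))

noncomputable def Pout (k : ℕ) (f : Finset (Fin k) → G → ℂ) (i : Fin k) (y : Fin k → G)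
    (x : G) : ℂ :=
  ∏ S ∈ univ.filter (fun S => i ∉ S), Cj^[k - S.card] (f S (x + ∑ j ∈ S, y j))

noncomputable def Pin (k : ℕ) (f : Finset (Fin k) → G → ℂ) (i : Fin k) (y : Fin k → G)
    (x : G) : ℂ :=
  ∏ S ∈ univ.filter (fun S => i ∈ S), Cj^[k - S.card] (f S (x + ∑ j ∈ S.erase i, y j))

noncomputable def Bf (k : ℕ) (f : Finset (Fin k) → G → ℂ) (i : Fin k) (y : Fin k → G) : ℂ :=
  ∑ x : G, Pout k f i y x

noncomputable def Df (k : ℕ) (f : Finset (Fin k) → G → ℂ) (i : Fin k) (y : Fin k → G) : ℂ :=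
  ∑ x : G, Pin k f i y x

lemma sum_update_not_mem {k : ℕ} {i : Fin k} {S : Finset (Fin k)} (hS : i ∉ S)
    (y : Fin k → G) (t : G) : ∑ j ∈ S, Function.update y i t j = ∑ j ∈ S, y j :=
  Finset.sum_congr rfl (fun j hj => Function.update_of_ne (fun e : j = i => hS (e ▸ hj)) _ _)

lemma sum_update_mem {k : ℕ} {i : Fin k} {S : Finset (Fin k)} (hS : i ∈ S)
    (y : Fin k → G) (t : G) :
    ∑ j ∈ S, Function.update y i t j = t + ∑ j ∈ S.erase i, y j := by
  rw [Finset.sum_update_of_mem hS, Finset.sdiff_singleton_eq_erase]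

/-- splitting the cube product after substituting `yᵢ := t`. -/
lemma split_update (k : ℕ) (f : Finset (Fin k) → G → ℂ) (i : Fin k) (y : Fin k → G)
    (t x : G) :
    ∏ S : Finset (Fin k), Cj^[k - S.card] (f S (x + ∑ j ∈ S, Function.update y i t j))
      = Pin k f i y (x + t) * Pout k f i y x := by
  rw [← Finset.prod_filter_mul_prod_filter_not univ (fun S => i ∈ S)]
  congr 1
  · refine Finset.prod_congr rfl fun S hS => ?_
    simp only [Finset.mem_filter] at hS
    rw [sum_update_mem hS.2, ← add_assoc]
  · refine Finset.prod_congr rfl fun S hS => ?_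
    simp only [Finset.mem_filter] at hS
    rw [sum_update_not_mem hS.2]

lemma I1 (k : ℕ) (f : Finset (Fin k) → G → ℂ) (i : Fin k) :
    (Fintype.card G : ℂ) * gsum k f = ∑ y : Fin k → G, Bf k f i y * Df k f i y := by
  have step1 : (Fintype.card G : ℂ) * gsum k f
      = ∑ y : Fin k → G, ∑ t : G, ∑ x : G, Pin k f i y (x + t) * Pout k f i y x := by
    rw [gsum, Finset.sum_comm, ← sum_update k i]
    refine Finset.sum_congr rfl fun y _ => Finset.sum_congr rfl fun t _ => ?_
    exact Finset.sum_congr rfl fun x _ => split_update k f i y t x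
  rw [step1]
  refine Finset.sum_congr rfl fun y _ => ?_
  rw [Finset.sum_comm]
  have : ∀ x : G, ∑ t : G, Pin k f i y (x + t) * Pout k f i y x
      = Pout k f i y x * Df k f i y := by
    intro x
    rw [← Finset.sum_mul, mul_comm]
    congr 1
    exact Fintype.sum_equiv (Equiv.addLeft x) _ _ (fun t => rfl)
  simp_rw [this]
  rw [← Finset.sum_mul, Bf, mul_comm]


lemma split_update_erase (k : ℕ) (f : Finset (Fin k) → G → ℂ) (i : Fin k) (y : Fin k → G)
    (t x : G) :
    ∏ S : Finset (Fin k),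
        Cj^[k - S.card] (f (S.erase i) (x + ∑ j ∈ S, Function.update y i t j))
      = (starRingEnd ℂ) (Pout k f i y (x + t)) * Pout k f i y x := by
  rw [← Finset.prod_filter_mul_prod_filter_not univ (fun S => i ∈ S)]
  congr 1
  · rw [prod_reindex_insert i
      (fun S => Cj^[k - S.card] (f (S.erase i) (x + ∑ j ∈ S, Function.update y i t j))),
      Pout, map_prod]
    refine Finset.prod_congr rfl fun S hS => ?_
    simp only [Finset.mem_filter] at hS
    rw [Finset.erase_insert hS.2, Finset.card_insert_of_notMem hS.2,
        sum_update_mem (Finset.mem_insert_self i S) y t, Finset.erase_insert hS.2, ← add_assoc]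
    have h1 : (1:ℕ) ≤ k - S.card := by have := card_lt_of_not_mem hS.2; omega
    rw [show k - (S.card + 1) = (k - S.card) - 1 by omega, cj_pred h1]
  · refine Finset.prod_congr rfl fun S hS => ?_
    simp only [Finset.mem_filter] at hS
    rw [sum_update_not_mem hS.2, Finset.erase_eq_of_notMem hS.2]

lemma split_update_insert (k : ℕ) (f : Finset (Fin k) → G → ℂ) (i : Fin k) (y : Fin k → G)
    (t x : G) :
    ∏ S : Finset (Fin k),
        Cj^[k - S.card] (f (insert i S) (x + ∑ j ∈ S, Function.update y i t j))
      = Pin k f i y (x + t) * (starRingEnd ℂ) (Pin k f i y x) := by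
  rw [← Finset.prod_filter_mul_prod_filter_not univ (fun S => i ∈ S)]
  congr 1
  · refine Finset.prod_congr rfl fun S hS => ?_
    simp only [Finset.mem_filter] at hS
    rw [Finset.insert_eq_self.2 hS.2, sum_update_mem hS.2, ← add_assoc]
  · rw [Pin, map_prod, prod_reindex_insert i
      (fun S => (starRingEnd ℂ) (Cj^[k - S.card] (f S (x + ∑ j ∈ S.erase i, y j))))]
    refine Finset.prod_congr rfl fun S hS => ?_
    simp only [Finset.mem_filter] at hS
    rw [sum_update_not_mem hS.2, Finset.erase_insert hS.2, Finset.card_insert_of_notMem hS.2]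
    have h1 : (1:ℕ) ≤ k - S.card := by have := card_lt_of_not_mem hS.2; omega
    rw [show k - (S.card + 1) = (k - S.card) - 1 by omega, cj_pred h1, Complex.conj_conj]

lemma I2 (k : ℕ) (f : Finset (Fin k) → G → ℂ) (i : Fin k) :
    (Fintype.card G : ℂ) * gsum k (fun S => f (S.erase i))
      = ∑ y : Fin k → G, Bf k f i y * (starRingEnd ℂ) (Bf k f i y) := by
  have step1 : (Fintype.card G : ℂ) * gsum k (fun S => f (S.erase i))
      = ∑ y : Fin k → G, ∑ t : G, ∑ x : G,
          (starRingEnd ℂ) (Pout k f i y (x + t)) * Pout k f i y x := by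
    rw [gsum, Finset.sum_comm, ← sum_update k i]
    refine Finset.sum_congr rfl fun y _ => Finset.sum_congr rfl fun t _ => ?_
    exact Finset.sum_congr rfl fun x _ => split_update_erase k f i y t x
  rw [step1]
  refine Finset.sum_congr rfl fun y _ => ?_
  rw [Finset.sum_comm]
  have h2 : ∀ x : G, ∑ t : G, (starRingEnd ℂ) (Pout k f i y (x + t)) * Pout k f i y x
      = Pout k f i y x * (starRingEnd ℂ) (Bf k f i y) := by
    intro x
    rw [← Finset.sum_mul, mul_comm, ← map_sum]
    congr 2
    exact Fintype.sum_equiv (Equiv.addLeft x) _ _ (fun t => rfl)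
  simp_rw [h2]
  rw [← Finset.sum_mul, Bf]

lemma I3 (k : ℕ) (f : Finset (Fin k) → G → ℂ) (i : Fin k) :
    (Fintype.card G : ℂ) * gsum k (fun S => f (insert i S))
      = ∑ y : Fin k → G, Df k f i y * (starRingEnd ℂ) (Df k f i y) := by
  have step1 : (Fintype.card G : ℂ) * gsum k (fun S => f (insert i S))
      = ∑ y : Fin k → G, ∑ t : G, ∑ x : G,
          Pin k f i y (x + t) * (starRingEnd ℂ) (Pin k f i y x) := by
    rw [gsum, Finset.sum_comm, ← sum_update k i]
    refine Finset.sum_congr rfl fun y _ => Finset.sum_congr rfl fun t _ => ?_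
    exact Finset.sum_congr rfl fun x _ => split_update_insert k f i y t x
  rw [step1]
  refine Finset.sum_congr rfl fun y _ => ?_
  rw [Finset.sum_comm]
  have h2 : ∀ x : G, ∑ t : G, Pin k f i y (x + t) * (starRingEnd ℂ) (Pin k f i y x)
      = Df k f i y * (starRingEnd ℂ) (Pin k f i y x) := by
    intro x
    rw [← Finset.sum_mul]
    congr 1
    exact Fintype.sum_equiv (Equiv.addLeft x) _ _ (fun t => rfl)
  simp_rw [h2]
  rw [← Finset.mul_sum, ← map_sum, Df]


lemma step (k : ℕ) (f : Finset (Fin k) → G → ℂ) (i : Fin k) :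
    ‖gsum k f‖ ^ 2
      ≤ ‖gsum k (fun S => f (S.erase i))‖
          * ‖gsum k (fun S => f (insert i S))‖ := by
  have hN : (0:ℝ) < (Fintype.card G : ℝ) := by exact_mod_cast Fintype.card_pos
  have e1 : (Fintype.card G : ℝ) * ‖gsum k f‖
      = ‖∑ y : Fin k → G, Bf k f i y * Df k f i y‖ := by
    have h := congrArg (norm : ℂ → ℝ) (I1 k f i)
    rwa [norm_mul, Complex.norm_natCast] at h
  have e2 : (Fintype.card G : ℝ) * ‖gsum k (fun S => f (S.erase i))‖
      = ∑ y : Fin k → G, Complex.normSq (Bf k f i y) := by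
    have h := I2 k f i
    simp_rw [Complex.mul_conj] at h
    rw [← Complex.ofReal_sum] at h
    have h2 := congrArg (norm : ℂ → ℝ) h
    rwa [norm_mul, Complex.norm_natCast, Complex.norm_real, Real.norm_eq_abs,
        abs_of_nonneg (Finset.sum_nonneg fun y _ => Complex.normSq_nonneg _)] at h2
  have e3 : (Fintype.card G : ℝ) * ‖gsum k (fun S => f (insert i S))‖
      = ∑ y : Fin k → G, Complex.normSq (Df k f i y) := by
    have h := I3 k f i
    simp_rw [Complex.mul_conj] at h
    rw [← Complex.ofReal_sum] at h
    have h2 := congrArg (norm : ℂ → ℝ) h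
    rwa [norm_mul, Complex.norm_natCast, Complex.norm_real, Real.norm_eq_abs,
        abs_of_nonneg (Finset.sum_nonneg fun y _ => Complex.normSq_nonneg _)] at h2
  have cauchy : ‖∑ y : Fin k → G, Bf k f i y * Df k f i y‖ ^ 2
      ≤ (∑ y : Fin k → G, Complex.normSq (Bf k f i y))
          * (∑ y : Fin k → G, Complex.normSq (Df k f i y)) := by
    calc ‖∑ y : Fin k → G, Bf k f i y * Df k f i y‖ ^ 2
        ≤ (∑ y : Fin k → G, ‖Bf k f i y * Df k f i y‖) ^ 2 := by
          apply pow_le_pow_left₀ (norm_nonneg _) (norm_sum_le _ _)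
      _ = (∑ y : Fin k → G, ‖Bf k f i y‖ * ‖Df k f i y‖) ^ 2 := by
          simp [norm_mul]
      _ ≤ (∑ y : Fin k → G, ‖Bf k f i y‖ ^ 2)
            * (∑ y : Fin k → G, ‖Df k f i y‖ ^ 2) :=
          Finset.sum_mul_sq_le_sq_mul_sq _ _ _
      _ = (∑ y : Fin k → G, Complex.normSq (Bf k f i y))
            * (∑ y : Fin k → G, Complex.normSq (Df k f i y)) := by
          simp [Complex.sq_norm]
  have final : (Fintype.card G : ℝ)^2 * ‖gsum k f‖ ^ 2
      ≤ (Fintype.card G : ℝ)^2 * (‖gsum k (fun S => f (S.erase i))‖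
          * ‖gsum k (fun S => f (insert i S))‖) := by
    calc (Fintype.card G : ℝ)^2 * ‖gsum k f‖ ^ 2
        = ((Fintype.card G : ℝ) * ‖gsum k f‖)^2 := by ring
      _ = ‖∑ y : Fin k → G, Bf k f i y * Df k f i y‖ ^ 2 := by rw [e1]
      _ ≤ (∑ y : Fin k → G, Complex.normSq (Bf k f i y))
            * (∑ y : Fin k → G, Complex.normSq (Df k f i y)) := cauchy
      _ = ((Fintype.card G : ℝ) * ‖gsum k (fun S => f (S.erase i))‖)
            * ((Fintype.card G : ℝ) * ‖gsum k (fun S => f (insert i S))‖) := by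
          rw [e2, e3]
      _ = (Fintype.card G : ℝ)^2 * (‖gsum k (fun S => f (S.erase i))‖
            * ‖gsum k (fun S => f (insert i S))‖) := by ring
  exact le_of_mul_le_mul_left final (by positivity)

lemma setid1 {k : ℕ} {i : Fin k} {T ε S : Finset (Fin k)} (hiT : i ∉ T) (hiε : i ∉ ε) :
    ((S \ T) ∪ ε).erase i = (S \ insert i T) ∪ ε := by
  ext j
  by_cases hj : j = i
  · subst hj; simp [hiT, hiε]
  · simp only [Finset.mem_erase, Finset.mem_union, Finset.mem_sdiff, Finset.mem_insert, hj,
      not_false_iff, true_and, false_or]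
    tauto

lemma setid2 {k : ℕ} {i : Fin k} {T ε S : Finset (Fin k)} (hiT : i ∉ T) :
    insert i ((S \ T) ∪ ε) = (S \ insert i T) ∪ insert i ε := by
  ext j
  by_cases hj : j = i
  · subst hj; simp
  · simp only [Finset.mem_insert, Finset.mem_union, Finset.mem_sdiff]
    tauto

lemma main (k : ℕ) (T : Finset (Fin k)) (f : Finset (Fin k) → G → ℂ) :
    ‖gsum k f‖ ^ (2 ^ T.card)
      ≤ ∏ ε ∈ T.powerset, ‖gsum k (fun S => f ((S \ T) ∪ ε))‖ := by
  induction T using Finset.induction_on generalizing f with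
  | empty => simp
  | @insert i T hiT IH =>
    have hexp : (2:ℕ) ^ (insert i T).card = 2 * 2 ^ T.card := by
      rw [Finset.card_insert_of_notMem hiT, pow_succ]; ring
    have key : ‖gsum k f‖ ^ (2 ^ (insert i T).card)
        ≤ (∏ ε ∈ T.powerset,
              ‖gsum k (fun S => f (((S \ T) ∪ ε).erase i))‖)
          * ∏ ε ∈ T.powerset,
              ‖gsum k (fun S => f (insert i ((S \ T) ∪ ε)))‖ := by
      calc ‖gsum k f‖ ^ (2 ^ (insert i T).card)
          = (‖gsum k f‖ ^ 2) ^ (2 ^ T.card) := by rw [hexp, pow_mul]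
        _ ≤ (‖gsum k (fun S => f (S.erase i))‖
              * ‖gsum k (fun S => f (insert i S))‖) ^ (2 ^ T.card) :=
            pow_le_pow_left₀ (sq_nonneg _) (step k f i) _
        _ = ‖gsum k (fun S => f (S.erase i))‖ ^ (2 ^ T.card)
              * ‖gsum k (fun S => f (insert i S))‖ ^ (2 ^ T.card) := mul_pow _ _ _
        _ ≤ _ := by
            refine mul_le_mul (IH _) (IH _) (pow_nonneg (norm_nonneg _) _)
              (Finset.prod_nonneg fun ε _ => norm_nonneg _)
    refine key.trans (le_of_eq ?_)
    rw [Finset.powerset_insert, Finset.prod_union, Finset.prod_image]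
    · congr 1
      · refine Finset.prod_congr rfl fun ε hε => ?_
        have hiε : i ∉ ε := fun h => hiT (Finset.mem_powerset.1 hε h)
        congr 1
        congr 1
        funext S
        rw [setid1 hiT hiε]
      · refine Finset.prod_congr rfl fun ε hε => ?_
        congr 1
        congr 1
        funext S
        rw [setid2 hiT]
    · intro a ha b hb hab
      have hia : i ∉ a := fun h => hiT (Finset.mem_powerset.1 ha h)
      have hib : i ∉ b := fun h => hiT (Finset.mem_powerset.1 hb h)
      rw [← Finset.erase_insert hia, hab, Finset.erase_insert hib]
    · rw [Finset.disjoint_left]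
      intro ε hε hε2
      obtain ⟨ε', hε', rfl⟩ := Finset.mem_image.1 hε2
      exact hiT (Finset.mem_powerset.1 hε (Finset.mem_insert_self i ε'))

end GCS

/-- Gowers–Cauchy–Schwarz inequality: for a family of functions `F S : G → ℂ` indexed by
subsets `S ⊆ [k]`,
`|𝔼_{x,y₁,…,y_k} ∏_{S⊆[k]} C^{k-|S|} F_S(x + ∑_{i∈S} y_i)| ≤ ∏_{S⊆[k]} ‖F_S‖_{U^k}`. -/
theorem gowers_cauchy_schwarz {G : Type} [AddCommGroup G] [Fintype G] [DecidableEq G]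
    (k : ℕ) (F : Finset (Fin k) → G → ℂ) :
    ‖(∑ x : G, ∑ y : Fin k → G, ∏ S : Finset (Fin k),
        (fun z : ℂ => (starRingEnd ℂ) z)^[k - S.card] (F S (x + ∑ i ∈ S, y i))) /
      (Fintype.card G : ℂ) ^ (k + 1)‖ ≤ ∏ S : Finset (Fin k), gowersNorm k (F S) := by
  have hN : (0:ℝ) < (Fintype.card G : ℝ) := by exact_mod_cast Fintype.card_pos
  have hP : (0:ℝ) < (Fintype.card G : ℝ) ^ (k+1) := by positivity
  have habs : ∀ g : Finset (Fin k) → G → ℂ,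
      ‖(∑ x : G, ∑ y : Fin k → G, ∏ S : Finset (Fin k),
        (fun z : ℂ => (starRingEnd ℂ) z)^[k - S.card] (g S (x + ∑ i ∈ S, y i))) /
        (Fintype.card G : ℂ) ^ (k + 1)‖
      = ‖GCS.gsum k g‖ / (Fintype.card G : ℝ) ^ (k+1) := by
    intro g
    rw [norm_div, norm_pow, Complex.norm_natCast]
    rfl
  rw [habs F]
  have hpow : ∀ g : G → ℂ, gowersNorm k g ^ ((2:ℕ)^k)
      = ‖GCS.gsum k (fun _ => g)‖ / (Fintype.card G : ℝ) ^ (k+1) := by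
    intro g
    rw [gowersNorm,
      ← Real.rpow_natCast (‖_‖ ^ ((1:ℝ)/2^k)) (2^k),
      ← Real.rpow_mul (norm_nonneg _)]
    push_cast
    rw [one_div, inv_mul_cancel₀ (by positivity : ((2:ℝ))^k ≠ 0), Real.rpow_one]
    exact habs fun _ => g
  have hmain := GCS.main k Finset.univ F
  rw [Finset.powerset_univ, Finset.card_univ, Fintype.card_fin] at hmain
  have hmain2 : ‖GCS.gsum k F‖ ^ ((2:ℕ)^k)
      ≤ ∏ ε : Finset (Fin k), ‖GCS.gsum k (fun _ => F ε)‖ := by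
    refine hmain.trans (le_of_eq (Finset.prod_congr rfl fun ε _ => ?_))
    congr 1
    congr 1
    funext S
    rw [Finset.sdiff_eq_empty_iff_subset.2 (Finset.subset_univ S), Finset.empty_union]
  have hne : ((2:ℕ)^k) ≠ 0 := by positivity
  refine (pow_le_pow_iff_left₀ (by positivity)
    (Finset.prod_nonneg fun S _ => Real.rpow_nonneg (norm_nonneg _) _) hne).1 ?_
  calc (‖GCS.gsum k F‖ / (Fintype.card G : ℝ) ^ (k+1)) ^ ((2:ℕ)^k)
      = ‖GCS.gsum k F‖ ^ ((2:ℕ)^k)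
          / ((Fintype.card G : ℝ) ^ (k+1)) ^ ((2:ℕ)^k) := div_pow _ _ _
    _ ≤ (∏ ε : Finset (Fin k), ‖GCS.gsum k (fun _ => F ε)‖)
          / ((Fintype.card G : ℝ) ^ (k+1)) ^ ((2:ℕ)^k) :=
        (div_le_div_iff_of_pos_right (by positivity)).2 hmain2
    _ = ∏ S : Finset (Fin k), gowersNorm k (F S) ^ ((2:ℕ)^k) := by
        simp_rw [hpow]
        rw [Finset.prod_div_distrib, Finset.prod_const, Finset.card_univ,
          Fintype.card_finset, Fintype.card_fin]
    _ = (∏ S : Finset (Fin k), gowersNorm k (F S)) ^ ((2:ℕ)^k) :=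
        Finset.prod_pow _ _ _
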